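/- Let v_1, ..., v_m be real numbers such that |v_i| ≥ λ for at least k values of i, where λ > 0 and k ≥ 1. Let a_1, ..., a_m be independent uniform random signs in {-1, +1}. Then for all x ≥ 1, P(|a_1 v_1 + ... + a_m v_m| ≤ xλ) = O(x/√k), i.e., there is an absolute constant C such that this probability is at most C x/√k. -/

import Mathlib

open MeasureTheory

/-- The uniform probability measure on `{-1,+1}^m`-indexed sign patterns: this models `m`
iid uniform random signs. -/
noncomputable def rowMeasure (m : ℕ) : Measure (Fin m → Bool) :=
  (PMF.uniformOfFintype (Fin m → Bool)).toMeasure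

/-- The `±1` sign associated to a boolean. -/
def sgn (b : Bool) : ℝ := if b then 1 else -1

open Finset

lemma cb_sq (j : ℕ) : (Nat.centralBinom j : ℝ)^2 * (2*j+1) ≤ 16^j := by
  induction j with
  | zero => simp [Nat.centralBinom]
  | succ n ih =>
    have key : ((n:ℝ) + 1) * Nat.centralBinom (n+1) = 2 * (2*n+1) * Nat.centralBinom n := by
      exact_mod_cast congrArg (Nat.cast : ℕ → ℝ) (Nat.succ_mul_centralBinom_succ n)
    have key2 : (((n:ℝ) + 1) * Nat.centralBinom (n+1))^2
        = (2 * (2*(n:ℝ)+1) * Nat.centralBinom n)^2 := by rw [key]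
    have expand : ((Nat.centralBinom (n+1) : ℝ)^2 * (2*((n:ℝ)+1)+1)) * ((n:ℝ)+1)^2
        = (4*(2*(n:ℝ)+1)*(2*(n:ℝ)+3)) * ((Nat.centralBinom n : ℝ)^2 * (2*(n:ℝ)+1)) := by
      linear_combination (2*(n:ℝ)+3) * key2
    have h2 : 4*(2*(n:ℝ)+1)*(2*(n:ℝ)+3) ≤ 16 * ((n:ℝ)+1)^2 := by nlinarith
    have bound : (4*(2*(n:ℝ)+1)*(2*(n:ℝ)+3)) * ((Nat.centralBinom n : ℝ)^2 * (2*(n:ℝ)+1))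
        ≤ (16 * ((n:ℝ)+1)^2) * 16^n :=
      mul_le_mul h2 ih (by positivity) (by positivity)
    have final : ((Nat.centralBinom (n+1) : ℝ)^2 * (2*((n:ℝ)+1)+1)) * ((n:ℝ)+1)^2
        ≤ 16^(n+1) * ((n:ℝ)+1)^2 := by
      rw [expand]
      calc _ ≤ (16 * ((n:ℝ)+1)^2) * 16^n := bound
        _ = 16^(n+1) * ((n:ℝ)+1)^2 := by ring
    have hpos : (0:ℝ) < ((n:ℝ)+1)^2 := by positivity
    push_cast
    exact le_of_mul_le_mul_right final hpos

lemma choose_half_le (n : ℕ) : (n.choose (n/2) : ℝ) * Real.sqrt (n+1) ≤ 2^n := by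
  have sqrt_cb : ∀ j : ℕ, (Nat.centralBinom j : ℝ) * Real.sqrt (2*j+1) ≤ 4^j := by
    intro j
    have h1 : Real.sqrt ((Nat.centralBinom j : ℝ)^2 * (2*j+1)) ≤ Real.sqrt (16^j) :=
      Real.sqrt_le_sqrt (cb_sq j)
    rwa [Real.sqrt_mul (sq_nonneg _), Real.sqrt_sq (Nat.cast_nonneg _),
      show (16:ℝ)^j = ((4:ℝ)^j)^2 by rw [show (16:ℝ) = 4^2 by norm_num, ← pow_mul, pow_mul'],
      Real.sqrt_sq (by positivity)] at h1
  rcases Nat.even_or_odd n with ⟨j, hj⟩ | ⟨j, hj⟩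
  · subst hj
    have h2 : (j+j)/2 = j := by omega
    have h3 : (j+j).choose j = Nat.centralBinom j := by
      rw [Nat.centralBinom_eq_two_mul_choose, two_mul]
    rw [h2, h3]
    calc (Nat.centralBinom j : ℝ) * Real.sqrt (↑(j+j)+1)
        = (Nat.centralBinom j : ℝ) * Real.sqrt (2*j+1) := by push_cast; ring_nf
      _ ≤ 4^j := sqrt_cb j
      _ = 2^(j+j) := by
          rw [show (4:ℝ) = 2^2 by norm_num, ← pow_mul, two_mul]
  · subst hj
    have hhalf : (2*j+1)/2 = j := by omega
    rw [hhalf]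
    have hch : 2 * (2*j+1).choose j = Nat.centralBinom (j+1) := by
      rw [Nat.centralBinom_eq_two_mul_choose, show 2*(j+1) = (2*j+1) + 1 by ring,
        Nat.choose_succ_succ]
      have : (2*j+1).choose (j+1) = (2*j+1).choose j := by
        rw [← Nat.choose_symm (by omega : j+1 ≤ 2*j+1), show (2*j+1)-(j+1) = j by omega]
      simp only [Nat.succ_eq_add_one, this]
      ring
    have h1 : (((2*j+1).choose j : ℝ)) * Real.sqrt (2*(j+1)+1) ≤ 4^(j+1)/2 := by
      have h := sqrt_cb (j+1)
      rw [← hch] at h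
      push_cast at h ⊢
      nlinarith [Real.sqrt_nonneg (2*((j:ℝ)+1)+1)]
    calc (((2*j+1).choose j : ℝ)) * Real.sqrt (↑(2*j+1)+1)
        ≤ (((2*j+1).choose j : ℝ)) * Real.sqrt (2*((j:ℝ)+1)+1) := by
          apply mul_le_mul_of_nonneg_left _ (Nat.cast_nonneg _)
          apply Real.sqrt_le_sqrt; push_cast; linarith
      _ ≤ 4^(j+1)/2 := h1
      _ = 2^(2*j+1) := by
          rw [show (4:ℝ) = 2^2 by norm_num, ← pow_mul]
          rw [show 2*(j+1) = (2*j+1)+1 by ring, pow_succ]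
          ring



lemma count_window {α : Type*} [Fintype α] [DecidableEq α] (g : α → ℝ) (lam : ℝ)
    (hlam : 0 < lam) (hg : ∀ i, lam ≤ g i) (c : ℝ) :
    (Finset.univ.filter fun t : Finset α => (∑ i ∈ t, g i) ∈ Set.Ico c (c+lam)).card
      ≤ (Fintype.card α).choose (Fintype.card α / 2) := by
  apply IsAntichain.sperner
  rintro t ht t' ht' hne (hsub : t ⊆ t')
  simp only [coe_filter, Set.mem_setOf_eq, Set.mem_Ico, mem_univ, true_and] at ht ht'
  obtain ⟨i, hit', hit⟩ := exists_of_ssubset (hsub.ssubset_of_ne hne)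
  have hsum : ∑ i ∈ t' \ t, g i + ∑ i ∈ t, g i = ∑ i ∈ t', g i := Finset.sum_sdiff hsub
  have hone : lam ≤ ∑ i ∈ t' \ t, g i :=
    le_trans (hg i) (Finset.single_le_sum (fun j _ => le_trans hlam.le (hg j))
      (mem_sdiff.2 ⟨hit', hit⟩))
  linarith [ht.1, ht.2, ht'.1, ht'.2]

lemma count_Icc {α : Type*} [Fintype α] [DecidableEq α] (g : α → ℝ) (lam : ℝ)
    (hlam : 0 < lam) (hg : ∀ i, lam ≤ g i) (a L : ℝ) :
    (Finset.univ.filter fun t : Finset α => (∑ i ∈ t, g i) ∈ Set.Icc a (a+L)).card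
      ≤ (⌊L/lam⌋₊ + 1) * (Fintype.card α).choose (Fintype.card α / 2) := by
  have hsub : (univ.filter fun t : Finset α => (∑ i ∈ t, g i) ∈ Set.Icc a (a+L))
      ⊆ (range (⌊L/lam⌋₊ + 1)).biUnion fun j =>
          univ.filter fun t : Finset α =>
            (∑ i ∈ t, g i) ∈ Set.Ico (a + j*lam) (a + j*lam + lam) := by
    intro t ht
    simp only [mem_filter, Set.mem_Icc, mem_univ, true_and] at ht
    obtain ⟨h1, h2⟩ := ht
    refine mem_biUnion.2 ⟨⌊(∑ i ∈ t, g i - a)/lam⌋₊, ?_, ?_⟩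
    · rw [mem_range]
      refine Nat.lt_succ_of_le (Nat.floor_le_floor ?_)
      gcongr
      linarith
    · simp only [mem_filter, Set.mem_Ico, mem_univ, true_and]
      constructor
      · have h3 : (⌊(∑ i ∈ t, g i - a)/lam⌋₊ : ℝ) ≤ (∑ i ∈ t, g i - a)/lam :=
          Nat.floor_le (div_nonneg (by linarith) hlam.le)
        rw [le_div_iff₀ hlam] at h3
        linarith
      · have h4 := Nat.lt_floor_add_one ((∑ i ∈ t, g i - a)/lam)
        rw [div_lt_iff₀ hlam] at h4
        linarith
  calc (univ.filter fun t : Finset α => (∑ i ∈ t, g i) ∈ Set.Icc a (a+L)).card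
      ≤ _ := card_le_card hsub
    _ ≤ ∑ j ∈ range (⌊L/lam⌋₊ + 1), (univ.filter fun t : Finset α =>
          (∑ i ∈ t, g i) ∈ Set.Ico (a + j*lam) (a + j*lam + lam)).card := card_biUnion_le
    _ ≤ ∑ _j ∈ range (⌊L/lam⌋₊ + 1), (Fintype.card α).choose (Fintype.card α / 2) :=
        Finset.sum_le_sum fun j _ => count_window g lam hlam hg (a + j*lam)
    _ = (⌊L/lam⌋₊ + 1) * (Fintype.card α).choose (Fintype.card α / 2) := by
        rw [Finset.sum_const, card_range, smul_eq_mul]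

lemma fiber_count (m : ℕ) (lam x : ℝ) (hlam : 0 < lam) (v : Fin m → ℝ)
    (B : Finset (Fin m)) (hB : ∀ i ∈ B, lam ≤ |v i|) (c : Fin m → Bool) :
    (Finset.univ.filter fun b : Fin m → Bool =>
        (|∑ i, sgn (b i) * v i| ≤ x * lam) ∧ (fun j => if j ∈ B then false else b j) = c).card
      ≤ (⌊x⌋₊ + 1) * B.card.choose (B.card / 2) := by
  classical
  set w : ↥B → ℝ := fun i => |v i.1| with hw
  set A : ℝ := (∑ i ∈ Bᶜ, sgn (c i) * v i) - ∑ i : ↥B, w i with hA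
  set a : ℝ := (-(x*lam) - A)/2 with ha
  have key : ∀ b : Fin m → Bool, ((fun j => if j ∈ B then false else b j) = c) →
      (∑ i, sgn (b i) * v i)
        = A + 2 * ∑ i ∈ Finset.univ.filter (fun i : ↥B => 0 ≤ sgn (b i.1) * v i.1), w i := by
    intro b hb
    have hsplit : ∑ i, sgn (b i) * v i
        = ∑ i ∈ B, sgn (b i) * v i + ∑ i ∈ Bᶜ, sgn (b i) * v i :=
      (Finset.sum_add_sum_compl B _).symm
    have houter : ∑ i ∈ Bᶜ, sgn (b i) * v i = ∑ i ∈ Bᶜ, sgn (c i) * v i := by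
      refine Finset.sum_congr rfl fun i hi => ?_
      rw [Finset.mem_compl] at hi
      rw [← congrFun hb i, if_neg hi]
    have hinner : ∑ i ∈ B, sgn (b i) * v i
        = 2 * ∑ i ∈ Finset.univ.filter (fun i : ↥B => 0 ≤ sgn (b i.1) * v i.1), w i
          - ∑ i : ↥B, w i := by
      rw [← Finset.sum_coe_sort B (fun i => sgn (b i) * v i)]
      have hpt : ∀ i ∈ (Finset.univ : Finset ↥B), sgn (b i.1) * v i.1
          = 2 * (if 0 ≤ sgn (b i.1) * v i.1 then w i else 0) - w i := by
        intro i _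
        have habs : |sgn (b i.1) * v i.1| = w i := by
          rw [abs_mul]; cases hbi : b i.1 <;> simp [sgn, hw]
        by_cases h : 0 ≤ sgn (b i.1) * v i.1
        · rw [if_pos h, ← habs, abs_of_nonneg h]; ring
        · push_neg at h
          rw [if_neg (not_le.2 h), ← habs, abs_of_neg h]; ring
      rw [Finset.sum_congr rfl hpt, Finset.sum_sub_distrib, ← Finset.mul_sum,
        Finset.sum_filter]
    rw [hsplit, houter, hinner, hA]; ring
  have hmaps : ∀ b ∈ (Finset.univ.filter fun b : Fin m → Bool =>
        (|∑ i, sgn (b i) * v i| ≤ x * lam) ∧ (fun j => if j ∈ B then false else b j) = c),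
      (Finset.univ.filter (fun i : ↥B => 0 ≤ sgn (b i.1) * v i.1))
        ∈ (Finset.univ.filter fun t : Finset ↥B =>
            (∑ i ∈ t, w i) ∈ Set.Icc a (a + x*lam)) := by
    intro b hb
    rw [Finset.mem_filter] at hb ⊢
    obtain ⟨-, habs, hfib⟩ := hb
    rw [key b hfib, abs_le] at habs
    refine ⟨Finset.mem_univ _, Set.mem_Icc.2 ⟨?_, ?_⟩⟩ <;> rw [ha] <;>
      [linarith [habs.1]; linarith [habs.2]]
  have hinj : Set.InjOn (fun b : Fin m → Bool =>
      Finset.univ.filter (fun i : ↥B => 0 ≤ sgn (b i.1) * v i.1))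
      ((Finset.univ.filter fun b : Fin m → Bool =>
        (|∑ i, sgn (b i) * v i| ≤ x * lam) ∧
          (fun j => if j ∈ B then false else b j) = c) : Finset (Fin m → Bool)) := by
    intro b1 hb1 b2 hb2 heq
    rw [Finset.coe_filter, Set.mem_setOf_eq] at hb1 hb2
    funext i
    by_cases hi : i ∈ B
    · have hiff := Finset.ext_iff.1 heq ⟨i, hi⟩
      simp only [Finset.mem_filter, Finset.mem_univ, true_and] at hiff
      have hv : v i ≠ 0 := by
        have := hB i hi
        intro h; rw [h, abs_zero] at this; linarith
      by_contra hne
      have hflip : sgn (b1 i) = - sgn (b2 i) := by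
        cases h1 : b1 i <;> cases h2 : b2 i <;> simp_all [sgn]
      rw [hflip] at hiff
      rcases lt_or_gt_of_ne hv with h | h <;>
        cases h2 : b2 i <;> simp [sgn, h2] at hiff <;> obtain ⟨f, g⟩ := hiff <;>
          first | linarith [f h.le] | linarith [g h.le]
    · have e1 := congrFun hb1.2.2 i
      have e2 := congrFun hb2.2.2 i
      rw [if_neg hi] at e1 e2
      rw [e1, e2]
  calc (Finset.univ.filter fun b : Fin m → Bool =>
        (|∑ i, sgn (b i) * v i| ≤ x * lam) ∧ (fun j => if j ∈ B then false else b j) = c).card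
      ≤ (Finset.univ.filter fun t : Finset ↥B =>
            (∑ i ∈ t, w i) ∈ Set.Icc a (a + x*lam)).card :=
        Finset.card_le_card_of_injOn _ hmaps hinj
    _ ≤ (⌊(x*lam)/lam⌋₊ + 1) * (Fintype.card ↥B).choose (Fintype.card ↥B / 2) :=
        count_Icc w lam hlam (fun i => hB i.1 i.2) a (x*lam)
    _ = (⌊x⌋₊ + 1) * B.card.choose (B.card / 2) := by
        rw [mul_div_cancel_right₀ x hlam.ne', Fintype.card_coe]


open Classical in
/-- Erdős–Littlewood–Offord inequality: if at least `k ≥ 1` of the reals `v 1, …, v m` satisfy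
`|v i| ≥ λ`, and `a 1, …, a m` are iid uniform `±1` signs, then for every `x ≥ 1` one has
`P(|∑ i, a i * v i| ≤ x λ) ≤ C x / √k` for an absolute constant `C`. -/
theorem erdos_littlewood_offord :
    ∃ C : ℝ, 0 < C ∧
      ∀ (m k : ℕ) (lam : ℝ) (v : Fin m → ℝ) (x : ℝ),
        0 < lam → 1 ≤ k → 1 ≤ x →
        k ≤ (Finset.univ.filter fun i => lam ≤ |v i|).card →
        rowMeasure m {b | |∑ i, sgn (b i) * v i| ≤ x * lam} ≤
          ENNReal.ofReal (C * x / Real.sqrt k) := by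
  classical
  refine ⟨2, by norm_num, ?_⟩
  intro m k lam v x hlam hk hx hcard
  set B : Finset (Fin m) := Finset.univ.filter (fun i => lam ≤ |v i|) with hBdef
  set n := B.card with hn
  have hnm : n ≤ m := by
    have := Finset.card_le_univ B
    simpa using this
  have hkn : k ≤ n := by
    refine le_trans hcard (le_of_eq ?_)
    congr 1
  set N := (Finset.univ.filter fun b : Fin m → Bool =>
    |∑ i, sgn (b i) * v i| ≤ x * lam).card with hNdef
  have hB' : ∀ i ∈ B, lam ≤ |v i| := fun i hi => (Finset.mem_filter.1 hi).2
  -- counting bound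
  have hN : N ≤ ((⌊x⌋₊ + 1) * n.choose (n / 2)) * 2 ^ (m - n) := by
    have h1 : N ≤ ((⌊x⌋₊ + 1) * n.choose (n / 2)) *
        (((Finset.univ.filter fun b : Fin m → Bool =>
          |∑ i, sgn (b i) * v i| ≤ x * lam)).image
            (fun b j => if j ∈ B then false else b j)).card := by
      refine Finset.card_le_mul_card_image _ _ (fun c _ => ?_)
      rw [Finset.filter_filter]
      exact fiber_count m lam x hlam v B hB' c
    refine h1.trans (Nat.mul_le_mul_left _ ?_)
    have h2 : (((Finset.univ.filter fun b : Fin m → Bool =>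
          |∑ i, sgn (b i) * v i| ≤ x * lam)).image
            (fun b j => if j ∈ B then false else b j)).card
        ≤ Fintype.card (↥(Bᶜ) → Bool) := by
      rw [← Finset.card_univ]
      refine Finset.card_le_card_of_injOn (fun c (i : ↥(Bᶜ)) => c i.1)
        (fun c _ => Finset.mem_univ _) ?_
      intro c1 hc1 c2 hc2 heq
      rw [Finset.coe_image, Set.mem_image] at hc1 hc2
      obtain ⟨b1, -, rfl⟩ := hc1
      obtain ⟨b2, -, rfl⟩ := hc2
      funext j
      by_cases hj : j ∈ B
      · simp only [if_pos hj]
      · have h3 := congrFun heq ⟨j, Finset.mem_compl.2 hj⟩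
        simpa only [if_neg hj] using h3
    refine h2.trans (le_of_eq ?_)
    rw [Fintype.card_fun, Fintype.card_coe, Finset.card_compl, Fintype.card_bool,
      Fintype.card_fin]
  -- measure computation
  have hS : MeasurableSet {b : Fin m → Bool | |∑ i, sgn (b i) * v i| ≤ x * lam} :=
    (Set.to_countable _).measurableSet
  have hcard2 : (Fintype.card (Fin m → Bool)) = 2 ^ m := by
    simp [Fintype.card_fun]
  have hmeas : rowMeasure m {b : Fin m → Bool | |∑ i, sgn (b i) * v i| ≤ x * lam}
      = (N : ENNReal) / 2 ^ m := by
    rw [rowMeasure, PMF.toMeasure_apply_fintype]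
    have : ∀ b : Fin m → Bool,
        ({b : Fin m → Bool | |∑ i, sgn (b i) * v i| ≤ x * lam}).indicator
          (⇑(PMF.uniformOfFintype (Fin m → Bool))) b
        = if |∑ i, sgn (b i) * v i| ≤ x * lam then ((2:ENNReal) ^ m)⁻¹ else 0 := by
      intro b
      rw [Set.indicator_apply]
      split_ifs with h h' h'
      · rw [PMF.uniformOfFintype_apply, hcard2]; push_cast; ring
      · exact absurd h h'
      · exact absurd h' h
      · rfl
    rw [Finset.sum_congr rfl (fun b _ => this b), ← Finset.sum_filter,
      Finset.sum_const, ← hNdef, nsmul_eq_mul]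
    rw [ENNReal.div_eq_inv_mul, mul_comm]
  rw [hmeas]
  -- real-number estimate
  have hx0 : (0:ℝ) ≤ x := le_trans zero_le_one hx
  have hk0 : (0:ℝ) < k := by exact_mod_cast hk
  have hsq : (0:ℝ) < Real.sqrt k := Real.sqrt_pos.2 hk0
  have c1 : (n.choose (n/2) : ℝ) ≤ 2 ^ n / Real.sqrt k := by
    rw [le_div_iff₀ hsq]
    calc (n.choose (n/2) : ℝ) * Real.sqrt k
        ≤ (n.choose (n/2) : ℝ) * Real.sqrt (n+1) := by
          gcongr
          push_cast
          have : (k:ℝ) ≤ n := by exact_mod_cast hkn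
          linarith
      _ ≤ 2 ^ n := choose_half_le n
  have c2 : ((⌊x⌋₊ : ℝ) + 1) ≤ 2 * x := by
    have h4 := Nat.floor_le hx0
    linarith
  have hNR : (N : ℝ) ≤ (2 * x) * (2 ^ n / Real.sqrt k) * 2 ^ (m - n) := by
    have h5 : (N : ℝ) ≤ ((⌊x⌋₊ : ℝ) + 1) * (n.choose (n/2) : ℝ) * 2 ^ (m - n) := by
      exact_mod_cast hN
    refine h5.trans ?_
    have hpow : (0:ℝ) ≤ (2:ℝ) ^ (m - n) := by positivity
    refine mul_le_mul_of_nonneg_right (mul_le_mul c2 c1 (Nat.cast_nonneg _) (by linarith)) hpow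
  have hfin : (N : ℝ) / 2 ^ m ≤ 2 * x / Real.sqrt k := by
    rw [div_le_div_iff₀ (by positivity) hsq]
    have hpw : (2:ℝ) ^ n * 2 ^ (m - n) = 2 ^ m := by
      rw [← pow_add, Nat.add_sub_cancel' hnm]
    calc (N : ℝ) * Real.sqrt k
        ≤ ((2 * x) * (2 ^ n / Real.sqrt k) * 2 ^ (m - n)) * Real.sqrt k := by
          exact mul_le_mul_of_nonneg_right hNR hsq.le
      _ = 2 * x * (2 ^ n * 2 ^ (m - n)) := by field_simp
      _ = 2 * x * 2 ^ m := by rw [hpw]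
  calc (N : ENNReal) / 2 ^ m = ENNReal.ofReal ((N:ℝ) / 2 ^ m) := by
        rw [ENNReal.ofReal_div_of_pos (by positivity), ENNReal.ofReal_natCast,
          ENNReal.ofReal_pow (by norm_num : (0:ℝ) ≤ 2)]
        norm_num
      _ ≤ ENNReal.ofReal (2 * x / Real.sqrt k) := ENNReal.ofReal_le_ofReal hfin
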